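/- Let G be a finite connected simple graph with vertex set V, r ∈ V a distinguished root, and B ⊆ V a set of Byzantine vertices with r ∉ B. Set R = B ∪ {r} and suppose H : V → ℕ satisfies the 'min+1' recurrence with respect to R: H(v) = 0 for every v ∈ R, and H(v) = 1 + min{H(u) : u a neighbor of v} for every v ∉ R. Then every vertex v lying outside the containment zone S_B* (i.e. satisfying d(v,b) ≥ d(r,v) for every b ∈ B) has H(v) = d(r,v), its true breadth-first distance to the root. -/

import Mathlib

/-- If `H` satisfies the `min+1` recurrence with respect to `R = B ∪ {r}`, then every vertex
outside the containment zone `S_B*` (i.e. with `d(v,b) ≥ d(r,v)` for every Byzantine `b`) has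
`H v` equal to its true breadth-first distance `d(r,v)` to the root. -/
theorem minPlusOne_correct_outside_SBstar
    {V : Type*} [Fintype V] (G : SimpleGraph V) (hG : G.Connected) (r : V)
    (B : Set V) (hrB : r ∉ B)
    (H : V → ℕ)
    (hroot : ∀ v ∈ B ∪ {r}, H v = 0)
    (hmin : ∀ v ∉ B ∪ {r}, H v = 1 + sInf (H '' (G.neighborSet v))) :
    ∀ v : V, (∀ b ∈ B, G.dist r v ≤ G.dist v b) → H v = G.dist r v := by
  -- Lower bound: from H v we can reach some vertex of R within H v steps.
  have lower : ∀ n : ℕ, ∀ v : V, H v = n → ∃ u ∈ B ∪ {r}, G.dist v u ≤ n := by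
    intro n
    induction n with
    | zero =>
      intro v hv
      by_cases hvR : v ∈ B ∪ {r}
      · exact ⟨v, hvR, by simp⟩
      · have := hmin v hvR
        omega
    | succ n ih =>
      intro v hv
      have hvR : v ∉ B ∪ {r} := by
        intro h
        have := hroot v h
        omega
      have hvr : v ≠ r := by
        intro h; exact hvR (by simp [h])
      -- v has a neighbor
      obtain ⟨p, hp⟩ := (hG v r).exists_walk_length_eq_dist
      have hne : (H '' (G.neighborSet v)).Nonempty := by
        cases p with
        | nil => exact absurd rfl hvr
        | cons h q => exact ⟨H _, ⟨_, h, rfl⟩⟩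
      have heq := hmin v hvR
      have hsinf : sInf (H '' (G.neighborSet v)) = n := by omega
      have hmem := Nat.sInf_mem hne
      rw [hsinf] at hmem
      obtain ⟨w, hwadj, hwH⟩ := hmem
      obtain ⟨u, huR, hud⟩ := ih w hwH
      refine ⟨u, huR, ?_⟩
      have htri : G.dist v u ≤ G.dist v w + G.dist w u := hG.dist_triangle
      have h1 : G.dist v w ≤ 1 := by
        have := G.dist_le (SimpleGraph.Walk.cons hwadj SimpleGraph.Walk.nil)
        exact this
      omega
  -- Upper bound: H v ≤ dist v u for any u ∈ R.
  have upper : ∀ n : ℕ, ∀ v u : V, u ∈ B ∪ {r} → G.dist v u ≤ n → H v ≤ n := by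
    intro n
    induction n with
    | zero =>
      intro v u huR hd
      have : v = u := (hG.dist_eq_zero_iff).mp (Nat.le_zero.mp hd)
      rw [this, hroot u huR]
    | succ n ih =>
      intro v u huR hd
      by_cases hvR : v ∈ B ∪ {r}
      · rw [hroot v hvR]; omega
      · have heq := hmin v hvR
        have hvu : v ≠ u := by
          intro h; rw [h, hroot u huR] at heq
          have := Nat.one_le_iff_ne_zero.mpr (by omega : 1 + sInf (H '' (G.neighborSet u)) ≠ 0)
          omega
        obtain ⟨p, hp⟩ := (hG v u).exists_walk_length_eq_dist
        cases p with
        | nil => exact absurd rfl hvu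
        | cons hadj q =>
          rename_i w
          have hq : q.length = G.dist v u - 1 := by
            simp [SimpleGraph.Walk.length_cons] at hp; omega
          have hdw : G.dist w u ≤ n := by
            have := G.dist_le q
            have hdpos : 1 ≤ G.dist v u := hG.pos_dist_of_ne hvu
            omega
          have hHw : H w ≤ n := ih w u huR hdw
          have hle : sInf (H '' (G.neighborSet v)) ≤ H w :=
            Nat.sInf_le ⟨w, hadj, rfl⟩
          omega
  intro v hv
  refine Nat.le_antisymm ?_ ?_
  · have : G.dist v r ≤ G.dist r v := by rw [G.dist_comm]
    exact (upper (G.dist r v) v r (by simp) this)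
  · obtain ⟨u, huR, hud⟩ := lower (H v) v rfl
    rcases huR with hB | hr
    · have := hv u hB
      omega
    · simp only [Set.mem_singleton_iff] at hr
      subst hr
      rw [G.dist_comm] at hud
      exact hud
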